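/- Splitting estimate in L¹: for measurable functions u_1,…,u_n, v : [0,1] → [0,1], ∫₀¹ |∑_{k=1}^n u_k(t) · ∫₀ᵗ (u_k(s) − v(s)) ds| dt ≤ max_{C ⊆ {1,…,n}} ‖∑_{k∈C} (u_k − v)‖₁. -/

import Mathlib

open MeasureTheory

/-- The `L¹`-norm on `[0,1]` of a function. -/
noncomputable def L1norm (f : ℝ → ℝ) : ℝ :=
  ∫ t in Set.Icc (0 : ℝ) 1, |f t|

theorem stmt_11 (n : ℕ) (u : ℕ → ℝ → ℝ) (v : ℝ → ℝ)
    (hu_meas : ∀ k, Measurable (u k)) (hv_meas : Measurable v)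
    (hu_mem : ∀ k, ∀ᵐ t ∂(volume.restrict (Set.Icc (0 : ℝ) 1)),
      u k t ∈ Set.Icc (0 : ℝ) 1)
    (hv_mem : ∀ᵐ t ∂(volume.restrict (Set.Icc (0 : ℝ) 1)),
      v t ∈ Set.Icc (0 : ℝ) 1) :
    ∫ t in Set.Icc (0 : ℝ) 1,
        |∑ k ∈ Finset.Icc 1 n, (u k t * ∫ s in (0 : ℝ)..t, (u k s - v s))| ≤
      ((Finset.Icc 1 n).powerset).sup' (Finset.powerset_nonempty _)
        (fun C => L1norm (fun t => ∑ k ∈ C, (u k t - v t))) := by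
  set S := ((Finset.Icc 1 n).powerset).sup' (Finset.powerset_nonempty _)
      (fun C => L1norm (fun t => ∑ k ∈ C, (u k t - v t))) with hS
  haveI : IsFiniteMeasure (volume.restrict (Set.Icc (0:ℝ) 1)) := by
    constructor
    rw [Measure.restrict_apply_univ, Real.volume_Icc]
    exact ENNReal.ofReal_lt_top
  -- integrability facts
  have hIntu : ∀ k, IntegrableOn (u k) (Set.Icc (0:ℝ) 1) := by
    intro k
    refine ⟨(hu_meas k).aestronglyMeasurable, ?_⟩
    apply HasFiniteIntegral.of_bounded (C := 1)
    filter_upwards [hu_mem k] with t ht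
    rw [Real.norm_eq_abs, abs_le]
    exact ⟨by linarith [ht.1], ht.2⟩
  have hIntv : IntegrableOn v (Set.Icc (0:ℝ) 1) := by
    refine ⟨hv_meas.aestronglyMeasurable, ?_⟩
    apply HasFiniteIntegral.of_bounded (C := 1)
    filter_upwards [hv_mem] with t ht
    rw [Real.norm_eq_abs, abs_le]
    exact ⟨by linarith [ht.1], ht.2⟩
  have hInt : ∀ k, IntegrableOn (fun t => u k t - v t) (Set.Icc (0:ℝ) 1) :=
    fun k => (hIntu k).sub hIntv
  have hIntC : ∀ C : Finset ℕ,
      IntegrableOn (fun t => ∑ k ∈ C, (u k t - v t)) (Set.Icc (0:ℝ) 1) :=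
    fun C => integrable_finset_sum C (fun k _ => hInt k)
  -- key: for any C and t ∈ [0,1], |∫₀ᵗ ∑_{k∈C}(u_k - v)| ≤ S
  have key : ∀ C ∈ (Finset.Icc 1 n).powerset, ∀ t ∈ Set.Icc (0:ℝ) 1,
      |∫ s in (0:ℝ)..t, ∑ k ∈ C, (u k s - v s)| ≤ S := by
    intro C hC t ht
    have h1 : |∫ s in (0:ℝ)..t, ∑ k ∈ C, (u k s - v s)|
        ≤ ∫ s in (0:ℝ)..t, |∑ k ∈ C, (u k s - v s)| :=
      intervalIntegral.abs_integral_le_integral_abs ht.1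
    have h2 : (∫ s in (0:ℝ)..t, |∑ k ∈ C, (u k s - v s)|)
        ≤ ∫ s in Set.Icc (0:ℝ) 1, |∑ k ∈ C, (u k s - v s)| := by
      rw [intervalIntegral.integral_of_le ht.1]
      apply setIntegral_mono_set (hIntC C).abs
      · filter_upwards with s using abs_nonneg _
      · exact HasSubset.Subset.eventuallyLE
          (Set.Ioc_subset_Icc_self.trans (Set.Icc_subset_Icc le_rfl ht.2))
    have h3 : (∫ s in Set.Icc (0:ℝ) 1, |∑ k ∈ C, (u k s - v s)|) ≤ S :=
      Finset.le_sup' (fun C => L1norm (fun t => ∑ k ∈ C, (u k t - v t))) hC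
    linarith
  -- pointwise a.e. bound
  have hae : ∀ᵐ t ∂(volume.restrict (Set.Icc (0:ℝ) 1)),
      ‖|∑ k ∈ Finset.Icc 1 n, (u k t * ∫ s in (0:ℝ)..t, (u k s - v s))|‖ ≤ S := by
    have hmem := ae_restrict_mem (μ := volume) (measurableSet_Icc : MeasurableSet (Set.Icc (0:ℝ) 1))
    have hall : ∀ᵐ t ∂(volume.restrict (Set.Icc (0:ℝ) 1)),
        ∀ k, u k t ∈ Set.Icc (0:ℝ) 1 := ae_all_iff.mpr hu_mem
    filter_upwards [hmem, hall] with t htI hu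
    rw [Real.norm_eq_abs, abs_abs, abs_le]
    set F : ℕ → ℝ := fun k => ∫ s in (0:ℝ)..t, (u k s - v s) with hFdef
    have hsum : ∀ C : Finset ℕ,
        ∑ k ∈ C, F k = ∫ s in (0:ℝ)..t, ∑ k ∈ C, (u k s - v s) := by
      intro C
      rw [intervalIntegral.integral_finset_sum]
      intro k _
      apply IntegrableOn.intervalIntegrable
      apply (hInt k).mono_set
      rw [Set.uIcc_of_le htI.1]
      exact Set.Icc_subset_Icc le_rfl htI.2
    set B := (Finset.Icc 1 n).filter (fun k => 0 ≤ F k) with hB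
    set Bc := (Finset.Icc 1 n).filter (fun k => ¬ 0 ≤ F k) with hBc
    have hsplit : ∑ k ∈ Finset.Icc 1 n, u k t * F k
        = ∑ k ∈ B, u k t * F k + ∑ k ∈ Bc, u k t * F k :=
      (Finset.sum_filter_add_sum_filter_not _ _ _).symm
    have hBup : ∑ k ∈ B, u k t * F k ≤ ∑ k ∈ B, F k := by
      apply Finset.sum_le_sum
      intro k hk
      have hF : 0 ≤ F k := (Finset.mem_filter.mp hk).2
      exact mul_le_of_le_one_left hF (hu k).2
    have hBnn : 0 ≤ ∑ k ∈ B, u k t * F k := by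
      apply Finset.sum_nonneg
      intro k hk
      exact mul_nonneg (hu k).1 (Finset.mem_filter.mp hk).2
    have hBcnp : ∑ k ∈ Bc, u k t * F k ≤ 0 := by
      apply Finset.sum_nonpos
      intro k hk
      have hF : F k ≤ 0 := le_of_not_ge (Finset.mem_filter.mp hk).2
      exact mul_nonpos_of_nonneg_of_nonpos (hu k).1 hF
    have hBclo : ∑ k ∈ Bc, F k ≤ ∑ k ∈ Bc, u k t * F k := by
      apply Finset.sum_le_sum
      intro k hk
      have hF : F k ≤ 0 := le_of_not_ge (Finset.mem_filter.mp hk).2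
      nlinarith [(hu k).1, (hu k).2]
    have hkB : |∑ k ∈ B, F k| ≤ S := by
      rw [hsum B]
      exact key B (Finset.mem_powerset.mpr (Finset.filter_subset _ _)) t htI
    have hkBc : |∑ k ∈ Bc, F k| ≤ S := by
      rw [hsum Bc]
      exact key Bc (Finset.mem_powerset.mpr (Finset.filter_subset _ _)) t htI
    constructor
    · nlinarith [abs_le.mp hkBc, hsplit, hBnn, hBclo]
    · nlinarith [abs_le.mp hkB, hsplit, hBup, hBcnp]
  -- conclude
  have hnorm := norm_setIntegral_le_of_norm_le_const_ae (μ := volume)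
    (s := Set.Icc (0:ℝ) 1)
    (f := fun t => |∑ k ∈ Finset.Icc 1 n, (u k t * ∫ s in (0:ℝ)..t, (u k s - v s))|)
    (by rw [Real.volume_Icc]; exact ENNReal.ofReal_lt_top) hae
  have hμ : volume.real (Set.Icc (0:ℝ) 1) = 1 := by
    rw [Real.volume_real_Icc]; norm_num
  rw [hμ, mul_one] at hnorm
  calc (∫ t in Set.Icc (0:ℝ) 1,
        |∑ k ∈ Finset.Icc 1 n, (u k t * ∫ s in (0:ℝ)..t, (u k s - v s))|)
      ≤ ‖∫ t in Set.Icc (0:ℝ) 1,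
        |∑ k ∈ Finset.Icc 1 n, (u k t * ∫ s in (0:ℝ)..t, (u k s - v s))|‖ :=
        le_abs_self _
    _ ≤ S := hnorm
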